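/- arXiv:1005.1006 — 2 statements merged into one kernel-verified Lean document; each statement's English description precedes it below -/
import Mathlib

section
/- Let D_t = ∫₀ᵗ e^{-sA} T e^{-sA†} ds where A is an N×N complex matrix and T is a positive semidefinite N×N matrix. If the columns of the matrices {Aⁿ √T : n = 0, 1, 2, ...} span ℂᴺ, then D_t is a positive definite (hence invertible) self-adjoint matrix for every t > 0. -/
open MeasureTheory Matrix
open scoped ComplexOrder

section AuxLemmas
open NormedSpace

lemma aux1 (N : ℕ) (C B : Matrix (Fin N) (Fin N) ℂ) (x : Fin N → ℂ) (i : Fin N) (s : ℝ) :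
    HasDerivAt (fun u : ℝ => ((C * NormedSpace.exp ((-u) • B)) *ᵥ x) i)
      (-(((C * (B * NormedSpace.exp ((-s) • B))) *ᵥ x) i)) s := by
  letI : SeminormedRing (Matrix (Fin N) (Fin N) ℂ) := Matrix.linftyOpSemiNormedRing
  letI : NormedRing (Matrix (Fin N) (Fin N) ℂ) := Matrix.linftyOpNormedRing
  letI : NormedAlgebra ℝ (Matrix (Fin N) (Fin N) ℂ) := Matrix.linftyOpNormedAlgebra
  have h0 : HasDerivAt (fun u : ℝ => exp (u • B)) (B * exp ((-s) • B)) (-s) :=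
    hasDerivAt_exp_smul_const' B (-s)
  have h1 : HasDerivAt (fun u : ℝ => exp ((-u) • B))
      ((-1 : ℝ) • (B * exp ((-s) • B))) s :=
    h0.scomp s (hasDerivAt_neg s)
  let l : Matrix (Fin N) (Fin N) ℂ →ₗ[ℝ] ℂ :=
    { toFun := fun M => ((C * M) *ᵥ x) i
      map_add' := by intro a b; simp [mul_add, add_mulVec]
      map_smul' := by intro c a; simp [mul_smul_comm, smul_mulVec] }
  have h2 := (l.toContinuousLinearMap.hasFDerivAt).comp_hasDerivAt s h1
  have he : (exp : Matrix (Fin N) (Fin N) ℂ → _) = exp := rfl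
  rw [he] at h2
  convert h2 using 1
  · rfl
  · rfl
  · change _ = l _
    simp [l, Matrix.neg_mulVec]

lemma aux_cont (N : ℕ) (C B : Matrix (Fin N) (Fin N) ℂ) (x : Fin N → ℂ) (i : Fin N) :
    Continuous (fun u : ℝ => ((C * NormedSpace.exp ((-u) • B)) *ᵥ x) i) :=
  continuous_iff_continuousAt.2 fun s => (aux1 N C B x i s).continuousAt

lemma aux_entry_cont (N : ℕ) (B : Matrix (Fin N) (Fin N) ℂ) (i j : Fin N) :
    Continuous (fun u : ℝ => NormedSpace.exp ((-u) • B) i j) := by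
  have h := aux_cont N 1 B (Pi.single j 1) i
  simp only [one_mul] at h
  convert h using 2 with u
  simp [Matrix.mulVec, dotProduct, Pi.single_apply, mul_ite]

lemma interval_conj (f : ℝ → ℂ) (a b : ℝ) :
    ∫ s in a..b, star (f s) = star (∫ s in a..b, f s) := by
  simp only [Complex.star_def]
  rw [intervalIntegral, intervalIntegral, integral_conj, integral_conj, ← map_sub]

lemma quad (N : ℕ) (x : Fin N → ℂ) (F : ℝ → Matrix (Fin N) (Fin N) ℂ)
    (hF : ∀ i j, Continuous fun s => F s i j) (a b : ℝ) :
    star x ⬝ᵥ ((Matrix.of fun i j => ∫ s in a..b, F s i j) *ᵥ x)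
      = ∫ s in a..b, star x ⬝ᵥ (F s *ᵥ x) := by
  have h1 : ∀ i j, IntervalIntegrable (fun s => star (x i) * (F s i j * x j)) volume a b :=
    fun i j => (continuous_const.mul ((hF i j).mul continuous_const)).intervalIntegrable _ _
  simp only [dotProduct, Matrix.mulVec, Matrix.of_apply, Pi.star_apply, Finset.mul_sum]
  simp_rw [← intervalIntegral.integral_mul_const, ← intervalIntegral.integral_const_mul]
  rw [Finset.sum_congr rfl fun (i : Fin N) _ =>
    (intervalIntegral.integral_finset_sum fun j _ => h1 i j).symm]
  exact (intervalIntegral.integral_finset_sum fun (i : Fin N) _ =>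
    (continuous_finset_sum _ fun j _ =>
      continuous_const.mul ((hF i j).mul continuous_const)).intervalIntegrable (μ := volume) a b).symm

lemma aux_core (N : ℕ) (A S : Matrix (Fin N) (Fin N) ℂ) (hS : S.PosSemidef)
    (hspan : Submodule.span ℂ
      {v : Fin N → ℂ | ∃ (n : ℕ) (j : Fin N), v = fun i => (A ^ n * S) i j} = ⊤)
    (x : Fin N → ℂ) (t : ℝ) (ht : 0 < t)
    (h0 : ∀ s ∈ Set.Ioo (0:ℝ) t, (S * NormedSpace.exp ((-s) • Aᴴ)) *ᵥ x = 0) :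
    x = 0 := by
  have key : ∀ n : ℕ, ∀ s ∈ Set.Ioo (0:ℝ) t,
      (S * Aᴴ ^ n * NormedSpace.exp ((-s) • Aᴴ)) *ᵥ x = 0 := by
    intro n
    induction n with
    | zero => intro s hs; simpa using h0 s hs
    | succ n ih =>
      intro s hs
      funext i
      have hev : (fun u : ℝ => ((S * Aᴴ ^ n * NormedSpace.exp ((-u) • Aᴴ)) *ᵥ x) i)
          =ᶠ[nhds s] (fun _ => (0:ℂ)) := by
        filter_upwards [Ioo_mem_nhds hs.1 hs.2] with u hu
        simpa using congrFun (ih u hu) i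
      have hd := aux1 N (S * Aᴴ ^ n) (Aᴴ) x i s
      have h00 : HasDerivAt (fun u : ℝ => ((S * Aᴴ ^ n * NormedSpace.exp ((-u) • Aᴴ)) *ᵥ x) i)
          0 s := (hasDerivAt_const s (0:ℂ)).congr_of_eventuallyEq hev
      have huniq := hd.unique h00
      rw [neg_eq_zero] at huniq
      have hM : S * Aᴴ ^ (n+1) * NormedSpace.exp ((-s) • Aᴴ)
          = S * Aᴴ ^ n * (Aᴴ * NormedSpace.exp ((-s) • Aᴴ)) := by
        simp only [pow_succ, mul_assoc]
      rw [hM]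
      simpa using huniq
  set s₀ : ℝ := t/2 with hs₀def
  have hs₀ : s₀ ∈ Set.Ioo (0:ℝ) t := ⟨half_pos ht, half_lt_self ht⟩
  set y : Fin N → ℂ := NormedSpace.exp ((-s₀) • Aᴴ) *ᵥ x with hy_def
  have hy : ∀ n : ℕ, (S * Aᴴ ^ n) *ᵥ y = 0 := by
    intro n
    rw [hy_def, Matrix.mulVec_mulVec]
    exact key n s₀ hs₀
  have hker : ∀ v ∈ {v : Fin N → ℂ | ∃ (n : ℕ) (j : Fin N), v = fun i => (A ^ n * S) i j},
      star y ⬝ᵥ v = 0 := by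
    rintro v ⟨n, j, rfl⟩
    have h2 : (A ^ n * S)ᴴ = S * Aᴴ ^ n := by
      rw [conjTranspose_mul, conjTranspose_pow, hS.1]
    have h3 : star y ⬝ᵥ (fun i => (A ^ n * S) i j) = star (((A ^ n * S)ᴴ *ᵥ y) j) := by
      simp [dotProduct, Matrix.mulVec, Matrix.conjTranspose_apply, star_sum, star_mul',
        mul_comm]
    rw [h3, h2, hy n]
    simp
  have hy0 : y = 0 := by
    let l : (Fin N → ℂ) →ₗ[ℂ] ℂ :=
      { toFun := fun v => star y ⬝ᵥ v
        map_add' := fun a b => dotProduct_add _ _ _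
        map_smul' := fun c a => by simpa using dotProduct_smul c (star y) a }
    have hle : Submodule.span ℂ
        {v : Fin N → ℂ | ∃ (n : ℕ) (j : Fin N), v = fun i => (A ^ n * S) i j}
        ≤ LinearMap.ker l := Submodule.span_le.2 fun v hv => hker v hv
    have hmem : y ∈ LinearMap.ker l := by
      rw [hspan] at hle
      exact hle Submodule.mem_top
    exact dotProduct_star_self_eq_zero.mp hmem
  have hx : NormedSpace.exp (s₀ • Aᴴ) *ᵥ y = x := by
    rw [hy_def, Matrix.mulVec_mulVec, ← Matrix.exp_add_of_commute]
    · rw [show s₀ • Aᴴ + (-s₀) • Aᴴ = 0 by rw [← add_smul]; simp, NormedSpace.exp_zero,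
        Matrix.one_mulVec]
    · exact ((Commute.refl Aᴴ).smul_left s₀).smul_right (-s₀)
  rw [← hx, hy0, Matrix.mulVec_zero]

end AuxLemmas

/-- Let `D t = ∫₀ᵗ e^{-sA} T e^{-sA†} ds` (defined entrywise), where `A` is an
`N×N` complex matrix and `T` is positive semidefinite with positive semidefinite square root
`S = √T`.  If the columns of the matrices `Aⁿ √T`, `n = 0, 1, 2, ...` span `ℂᴺ` (Kalman
controllability), then `D t` is positive definite (hence invertible) and self-adjoint for
every `t > 0`. -/
theorem stmt0 (N : ℕ) (A T S : Matrix (Fin N) (Fin N) ℂ)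
    (hT : T.PosSemidef) (hS : S.PosSemidef) (hST : S * S = T)
    (hspan : Submodule.span ℂ
      {v : Fin N → ℂ | ∃ (n : ℕ) (j : Fin N), v = fun i => (A ^ n * S) i j} = ⊤)
    (D : ℝ → Matrix (Fin N) (Fin N) ℂ)
    (hD : ∀ t, D t = Matrix.of fun i j => ∫ s in (0:ℝ)..t,
      (NormedSpace.exp ((-s) • A) * T * NormedSpace.exp ((-s) • Aᴴ)) i j)
    (t : ℝ) (ht : 0 < t) :
    (D t).PosDef ∧ (D t).IsHermitian ∧ IsUnit (D t) := by
  have hconj : ∀ s : ℝ, NormedSpace.exp ((-s) • Aᴴ) = (NormedSpace.exp ((-s) • A))ᴴ := by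
    intro s
    rw [← Matrix.exp_conjTranspose]
    congr 1
    ext i j
    simp [Matrix.conjTranspose_apply, Complex.real_smul, _root_.map_mul, Complex.conj_ofReal]
  have hFeq : ∀ s : ℝ,
      NormedSpace.exp ((-s) • A) * T * NormedSpace.exp ((-s) • Aᴴ)
      = (NormedSpace.exp ((-s) • A) * S) * (NormedSpace.exp ((-s) • A) * S)ᴴ := by
    intro s
    rw [conjTranspose_mul, hS.1, hconj s, ← hST]
    simp only [Matrix.mul_assoc]
  have hFc : ∀ i j, Continuous fun s : ℝ =>
      (NormedSpace.exp ((-s) • A) * T * NormedSpace.exp ((-s) • Aᴴ)) i j := by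
    intro i j
    simp only [Matrix.mul_apply]
    exact continuous_finset_sum _ fun l _ => (continuous_finset_sum _ fun k _ =>
      (aux_entry_cont N A i k).mul continuous_const).mul (aux_entry_cont N Aᴴ l j)
  have hDh : (D t).IsHermitian := by
    rw [hD t]
    refine Matrix.IsHermitian.ext fun i j => ?_
    show star (∫ s in (0:ℝ)..t,
      (NormedSpace.exp ((-s) • A) * T * NormedSpace.exp ((-s) • Aᴴ)) j i) = _
    rw [← interval_conj]
    refine intervalIntegral.integral_congr fun s _ => ?_
    have hh := Matrix.isHermitian_mul_conjTranspose_self (NormedSpace.exp ((-s) • A) * S)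
    rw [hFeq s]
    exact hh.apply i j
  have hPD : (D t).PosDef := by
    refine Matrix.PosDef.of_dotProduct_mulVec_pos hDh fun x hx => ?_
    set g : ℝ → ℝ :=
      fun s => ∑ i, Complex.normSq (((S * NormedSpace.exp ((-s) • Aᴴ)) *ᵥ x) i) with hg
    have hquad : star x ⬝ᵥ ((D t) *ᵥ x) = ∫ s in (0:ℝ)..t, ((g s : ℝ) : ℂ) := by
      rw [hD t, quad N x _ hFc]
      refine intervalIntegral.integral_congr fun s _ => ?_
      rw [hFeq s, ← Matrix.mulVec_mulVec, dotProduct_mulVec,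
        show star x ᵥ* (NormedSpace.exp ((-s) • A) * S)
            = star ((NormedSpace.exp ((-s) • A) * S)ᴴ *ᵥ x) from
          by rw [Matrix.star_mulVec, Matrix.conjTranspose_conjTranspose],
        show (NormedSpace.exp ((-s) • A) * S)ᴴ = S * NormedSpace.exp ((-s) • Aᴴ) from
          by rw [conjTranspose_mul, hS.1, hconj s]]
      simp only [hg, dotProduct, Pi.star_apply, Complex.ofReal_sum, Complex.star_def]
      refine Finset.sum_congr rfl fun i _ => ?_
      rw [mul_comm, Complex.mul_conj]
    have hgc : Continuous g :=
      continuous_finset_sum _ fun i _ =>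
        Complex.continuous_normSq.comp (aux_cont N S Aᴴ x i)
    have hgnn : ∀ s, 0 ≤ g s := fun s => Finset.sum_nonneg fun i _ => Complex.normSq_nonneg _
    have hex : ∃ s₁ ∈ Set.Ioo (0:ℝ) t, 0 < g s₁ := by
      by_contra hcon
      push_neg at hcon
      refine hx (aux_core N A S hS hspan x t ht fun s hs => ?_)
      have h0 : g s = 0 := le_antisymm (hcon s hs) (hgnn s)
      funext i
      have h1 := (Finset.sum_eq_zero_iff_of_nonneg
        (fun i _ => Complex.normSq_nonneg _)).mp h0 i (Finset.mem_univ i)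
      simpa using Complex.normSq_eq_zero.mp h1
    obtain ⟨s₁, hs₁, hgs₁⟩ := hex
    have hipos : 0 < ∫ s in (0:ℝ)..t, g s := by
      have hopen : IsOpen (g ⁻¹' Set.Ioi 0 ∩ Set.Ioo 0 t) :=
        (isOpen_Ioi.preimage hgc).inter isOpen_Ioo
      obtain ⟨δ, hδ, hball⟩ := Metric.isOpen_iff.mp hopen s₁ ⟨hgs₁, hs₁⟩
      set a := max 0 (s₁ - δ) with ha
      set b := min t (s₁ + δ) with hb
      have ha0 : 0 ≤ a := le_max_left _ _
      have has₁ : a < s₁ := max_lt hs₁.1 (by linarith)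
      have hbs : s₁ < b := lt_min hs₁.2 (by linarith)
      have hab : a < b := has₁.trans hbs
      have hbt : b ≤ t := min_le_left _ _
      have hsub : ∀ u ∈ Set.Ioo a b, 0 < g u := by
        intro u hu
        have : u ∈ Metric.ball s₁ δ := by
          rw [Real.ball_eq_Ioo]
          exact ⟨lt_of_le_of_lt (le_max_right 0 (s₁ - δ)) hu.1,
            lt_of_lt_of_le hu.2 (min_le_right t (s₁ + δ))⟩
        exact (hball this).1
      have h2 : 0 < ∫ s in a..b, g s :=
        intervalIntegral.intervalIntegral_pos_of_pos_on (hgc.intervalIntegrable a b) hsub hab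
      have e1 : (∫ s in (0:ℝ)..a, g s) + (∫ s in a..t, g s) = ∫ s in (0:ℝ)..t, g s :=
        intervalIntegral.integral_add_adjacent_intervals
          (hgc.intervalIntegrable _ _) (hgc.intervalIntegrable _ _)
      have e2 : (∫ s in a..b, g s) + (∫ s in b..t, g s) = ∫ s in a..t, g s :=
        intervalIntegral.integral_add_adjacent_intervals
          (hgc.intervalIntegrable _ _) (hgc.intervalIntegrable _ _)
      have n1 : 0 ≤ ∫ s in (0:ℝ)..a, g s :=
        intervalIntegral.integral_nonneg ha0 fun u _ => hgnn u
      have n2 : 0 ≤ ∫ s in b..t, g s :=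
        intervalIntegral.integral_nonneg hbt fun u _ => hgnn u
      linarith
    have hcast : (∫ s in (0:ℝ)..t, ((g s : ℝ) : ℂ)) = ((∫ s in (0:ℝ)..t, g s : ℝ) : ℂ) :=
      RCLike.intervalIntegral_ofReal
    rw [hquad, hcast]
    exact Complex.zero_lt_real.mpr hipos
  exact ⟨hPD, hDh, hPD.isUnit⟩
end

section
/- Fix a positive integer M. Suppose α₁, α₂ : ℤ → ℂ are the Fourier coefficient sequences of two real functions on [0,2π] (so α_i(-m) = conj(α_i(m))), all coefficients α_i(m) are nonzero for |m| ≤ M, and for each m with 1 ≤ m ≤ M the vectors (α₁(m), α₁(-m)) and (α₂(m), α₂(-m)) in ℂ² are linearly independent. Then the family of vectors { (((-m²-1)ᵏ α_i(m))_{|m| ≤ M}) : k ∈ ℕ, i ∈ {1,2} } spans the space ℂ^{2M+1} of Fourier coefficient sequences supported on {|m| ≤ M}. -/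
open Finset Polynomial

/-- If all power sums of a finitely supported function vanish, the function vanishes
on the support (Vandermonde / Lagrange interpolation). -/
lemma aux_vdm (s : Finset ℂ) (f : ℂ → ℂ)
    (h : ∀ k : ℕ, ∑ μ ∈ s, f μ * μ ^ k = 0) : ∀ μ ∈ s, f μ = 0 := by
  have hp : ∀ p : ℂ[X], ∑ μ ∈ s, f μ * p.eval μ = 0 := by
    intro p
    induction p using Polynomial.induction_on' with
    | add p q hp hq =>
      simp only [eval_add, mul_add, Finset.sum_add_distrib, hp, hq, add_zero]
    | monomial n a =>
      simp only [eval_monomial]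
      calc ∑ μ ∈ s, f μ * (a * μ ^ n) = a * ∑ μ ∈ s, f μ * μ ^ n := by
            rw [Finset.mul_sum]; exact Finset.sum_congr rfl fun μ _ => by ring
        _ = 0 := by rw [h n, mul_zero]
  intro μ0 hμ0
  have hinj : Set.InjOn id (s : Set ℂ) := Function.injective_id.injOn
  have key := hp (Lagrange.basis s id μ0)
  rwa [Finset.sum_eq_single μ0
      (fun μ hμ hne => by
        have h0 := Lagrange.eval_basis_of_ne (v := id) (s := s) hne.symm hμ
        simp only [id_eq] at h0
        rw [h0, mul_zero])
      (fun h => absurd hμ0 h),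
    (by simpa using Lagrange.eval_basis_self hinj hμ0 :
      (Lagrange.basis s id μ0).eval μ0 = 1),
    mul_one] at key

/-- Linear independence of the rows of a 2×2 matrix implies its determinant is nonzero. -/
lemma aux_det (a b c d : ℂ) (h : LinearIndependent ℂ ![![a, b], ![c, d]]) :
    a * d - b * c ≠ 0 := by
  rw [LinearIndependent.pair_iff] at h
  intro hdet
  have h1 := h d (-b) (by
    funext i; fin_cases i <;>
      simp only [Fin.mk_zero, Fin.mk_one, Pi.add_apply, Pi.smul_apply, smul_eq_mul,
        Matrix.cons_val_zero, Matrix.cons_val_one, Matrix.head_cons, Pi.zero_apply] <;>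
      first | linear_combination hdet | ring)
  have h2 := h (-c) a (by
    funext i; fin_cases i <;>
      simp only [Fin.mk_zero, Fin.mk_one, Pi.add_apply, Pi.smul_apply, smul_eq_mul,
        Matrix.cons_val_zero, Matrix.cons_val_one, Matrix.head_cons, Pi.zero_apply] <;>
      first | linear_combination hdet | ring)
  have ha : a = 0 := h2.2
  have hb : b = 0 := neg_eq_zero.mp h1.2
  have h3 := h 1 0 (by
    funext i; fin_cases i <;>
      simp [ha, hb])
  exact one_ne_zero h3.1

/-- Solve a 2×2 homogeneous system with nonzero determinant. -/
lemma aux_solve (a b c d x y : ℂ) (hdet : a * d - b * c ≠ 0)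
    (h1 : x * a + y * b = 0) (h2 : x * c + y * d = 0) : x = 0 ∧ y = 0 := by
  constructor
  · have hx : x * (a * d - b * c) = 0 := by linear_combination d * h1 - b * h2
    exact (mul_eq_zero.mp hx).resolve_right hdet
  · have hy : y * (a * d - b * c) = 0 := by linear_combination a * h2 - c * h1
    exact (mul_eq_zero.mp hy).resolve_right hdet

/-- Fix a positive integer `M`.  Suppose `α₁, α₂ : ℤ → ℂ` are Fourier coefficient
sequences of real functions (so `αᵢ(-m) = conj (αᵢ(m))`), all coefficients `αᵢ(m)` are nonzero
for `|m| ≤ M`, and for each `1 ≤ m ≤ M` the vectors `(α₁(m), α₁(-m))` and `(α₂(m), α₂(-m))`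
in `ℂ²` are linearly independent.  Then the family
`{ ((-m²-1)ᵏ αᵢ(m))_{|m| ≤ M} : k ∈ ℕ, i ∈ {1,2} }` spans `ℂ^{2M+1}`, the space of Fourier
coefficient sequences supported on `{|m| ≤ M}`. -/
theorem stmt2 (M : ℕ) (hM : 0 < M) (α : Fin 2 → ℤ → ℂ)
    (hreal : ∀ i m, α i (-m) = starRingEnd ℂ (α i m))
    (hne : ∀ i, ∀ m : ℤ, |m| ≤ (M : ℤ) → α i m ≠ 0)
    (hindep : ∀ m : ℤ, 1 ≤ m → m ≤ (M : ℤ) →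
      LinearIndependent ℂ ![![α 0 m, α 0 (-m)], ![α 1 m, α 1 (-m)]]) :
    Submodule.span ℂ
      {v : ↥(Finset.Icc (-(M:ℤ)) M) → ℂ |
        ∃ (k : ℕ) (i : Fin 2), v = fun m : ↥(Finset.Icc (-(M:ℤ)) (M:ℤ)) => (-(((m : ℤ) : ℂ))^2 - 1)^k * α i (m : ℤ)} = ⊤ := by
  classical
  apply Subspace.dualAnnihilator_inj.mp
  rw [Submodule.dualAnnihilator_top, eq_bot_iff]
  intro φ hφ
  rw [Submodule.mem_dualAnnihilator] at hφ
  -- φ vanishes on all generators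
  have hgen : ∀ (k : ℕ) (i : Fin 2),
      φ (fun m : ↥(Finset.Icc (-(M:ℤ)) (M:ℤ)) => (-(((m : ℤ) : ℂ))^2 - 1)^k * α i (m : ℤ)) = 0 :=
    fun k i => hφ _ (Submodule.subset_span ⟨k, i, rfl⟩)
  let ι := ↥(Finset.Icc (-(M:ℤ)) (M:ℤ))
  set c : ι → ℂ := fun m => φ (fun j => if m = j then 1 else 0) with hc
  have hφv : ∀ v : ι → ℂ, φ v = ∑ m : ι, v m * c m := by
    intro v
    simpa only [smul_eq_mul] using LinearMap.pi_apply_eq_sum_univ φ v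
  set L : ι → ℂ := fun m => -(((m : ℤ) : ℂ))^2 - 1 with hL
  -- the grouped coefficient function
  set s : Finset ℂ := Finset.univ.image L with hs
  have hsum : ∀ (i : Fin 2) (k : ℕ),
      ∑ μ ∈ s, (∑ m ∈ Finset.univ.filter (fun m => L m = μ), c m * α i (m : ℤ)) * μ ^ k = 0 := by
    intro i k
    have : ∑ μ ∈ s, (∑ m ∈ Finset.univ.filter (fun m => L m = μ), c m * α i (m : ℤ)) * μ ^ k
        = ∑ m : ι, c m * α i (m : ℤ) * (L m) ^ k := by
      rw [← Finset.sum_fiberwise_of_maps_to (fun m _ => Finset.mem_image_of_mem L (Finset.mem_univ m))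
        (fun m => c m * α i (m : ℤ) * (L m) ^ k)]
      refine Finset.sum_congr rfl fun μ _ => ?_
      rw [Finset.sum_mul]
      refine Finset.sum_congr rfl fun m hm => ?_
      rw [(Finset.mem_filter.mp hm).2]
    rw [this]
    have := hgen k i
    rw [hφv] at this
    rw [← this]
    exact Finset.sum_congr rfl fun m _ => by simp only [hL]; ring
  have hf0 : ∀ (i : Fin 2), ∀ μ ∈ s,
      ∑ m ∈ Finset.univ.filter (fun m => L m = μ), c m * α i (m : ℤ) = 0 := by
    intro i
    exact aux_vdm s _ (hsum i)
  -- now show c = 0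
  have hc0 : ∀ m0 : ι, c m0 = 0 := by
    intro m0
    have hm0mem := m0.2
    rw [Finset.mem_Icc] at hm0mem
    have habs : |(m0 : ℤ)| ≤ (M : ℤ) := abs_le.mpr hm0mem
    -- fiber of L (L m0)
    have hLiff : ∀ m : ι, L m = L m0 ↔ (m : ℤ) = (m0 : ℤ) ∨ (m : ℤ) = -(m0 : ℤ) := by
      intro m
      constructor
      · intro hLm
        have h2 : (((m : ℤ) : ℂ))^2 = (((m0 : ℤ) : ℂ))^2 := by
          simp only [hL] at hLm
          linear_combination -hLm
        have h3 : ((m : ℤ)^2 : ℤ) = ((m0 : ℤ)^2 : ℤ) := by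
          exact_mod_cast h2
        have h4 : ((m : ℤ) - (m0 : ℤ)) * ((m : ℤ) + (m0 : ℤ)) = 0 := by linear_combination h3
        rcases mul_eq_zero.mp h4 with h | h
        · left; linarith
        · right; linarith
      · intro h
        rcases h with h | h <;> simp only [hL, h] <;> push_cast <;> ring
    by_cases hz : (m0 : ℤ) = 0
    · -- fiber is {m0}
      have hfib : Finset.univ.filter (fun m => L m = L m0) = {m0} := by
        ext m
        simp only [Finset.mem_filter, Finset.mem_univ, true_and, Finset.mem_singleton, hLiff m, hz,
          neg_zero, or_self]
        exact ⟨fun h => Subtype.ext (h.trans hz.symm), fun h => by rw [h]; exact hz⟩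
      have := hf0 0 (L m0) (Finset.mem_image_of_mem L (Finset.mem_univ m0))
      rw [hfib, Finset.sum_singleton] at this
      exact (mul_eq_zero.mp this).resolve_right (hne 0 _ habs)
    · -- fiber is {m0, m1} with m1 = -m0
      have hm1mem : -(m0 : ℤ) ∈ Finset.Icc (-(M:ℤ)) (M:ℤ) := by
        rw [Finset.mem_Icc]; omega
      set m1 : ι := ⟨-(m0 : ℤ), hm1mem⟩ with hm1
      have hne01 : m0 ≠ m1 := by
        intro h
        have h2 : (m0 : ℤ) = -(m0 : ℤ) := congrArg Subtype.val h
        omega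
      have hfib : Finset.univ.filter (fun m => L m = L m0) = {m0, m1} := by
        ext m
        simp only [Finset.mem_filter, Finset.mem_univ, true_and, Finset.mem_insert,
          Finset.mem_singleton, hLiff m]
        constructor
        · rintro (h | h)
          · left; exact Subtype.ext h
          · right; exact Subtype.ext h
        · rintro (h | h)
          · left; rw [h]
          · right; rw [h]
      have heq : ∀ i : Fin 2, c m0 * α i (m0 : ℤ) + c m1 * α i (-(m0 : ℤ)) = 0 := by
        intro i
        have := hf0 i (L m0) (Finset.mem_image_of_mem L (Finset.mem_univ m0))
        rw [hfib, Finset.sum_pair hne01] at this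
        exact this
      rcases lt_or_gt_of_ne hz with hneg | hpos
      · -- m0 < 0; use n = -m0 ≥ 1
        have hdet := aux_det _ _ _ _ (hindep (-(m0 : ℤ)) (by omega) (by omega))
        -- matrix entries: a = α 0 (-m0), b = α 0 (m0), c = α 1 (-m0), d = α 1 (m0)
        rw [neg_neg] at hdet
        -- equations: c m1 * a + c m0 * b = 0 etc (reorder heq)
        have e0 : c m1 * α 0 (-(m0:ℤ)) + c m0 * α 0 (m0:ℤ) = 0 := by
          linear_combination heq 0
        have e1 : c m1 * α 1 (-(m0:ℤ)) + c m0 * α 1 (m0:ℤ) = 0 := by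
          linear_combination heq 1
        exact (aux_solve _ _ _ _ _ _ hdet e0 e1).2
      · have hdet := aux_det _ _ _ _ (hindep (m0 : ℤ) (by omega) (by omega))
        exact (aux_solve _ _ _ _ _ _ hdet (heq 0) (heq 1)).1
  -- conclude φ = 0
  rw [Submodule.mem_bot]
  refine LinearMap.ext fun v => ?_
  rw [hφv v]
  simp [hc0]
end
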